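/- The modulus of P_n strictly dominates that of Q₁ on the entire imaginary axis: for every real y, |P_n(iy)| > |Q₁(iy)|. -/

import Mathlib

open Complex Finset

lemma abs_sub_yI_ge (a y : ℝ) (_ha : 0 ≤ a) : a ≤ ‖(a : ℂ) - y * Complex.I‖ := by
  have h := Complex.abs_re_le_norm ((a : ℂ) - y * Complex.I)
  simp at h
  calc a ≤ |a| := le_abs_self a
    _ ≤ _ := h

lemma keyA (a b c y : ℝ) (ha : 0 ≤ a) (hb : 0 ≤ b) (_hc : 0 ≤ c) :
    a * ‖(c : ℂ) - y * Complex.I‖ ≤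
      ‖((a : ℂ) - y * Complex.I) * (((b : ℂ) + (c : ℂ)) - y * Complex.I) - (a : ℂ) * (b : ℂ)‖ := by
  have h2 : (a * ‖(c : ℂ) - y * Complex.I‖)^2 ≤
      (‖((a : ℂ) - y * Complex.I) * (((b : ℂ) + (c : ℂ)) - y * Complex.I) - (a : ℂ) * (b : ℂ)‖)^2 := by
    rw [mul_pow, Complex.sq_norm, Complex.sq_norm]
    simp [Complex.normSq_apply, Complex.mul_re, Complex.mul_im]
    ring_nf
    nlinarith [sq_nonneg y, sq_nonneg (y*y), mul_nonneg ha hb, mul_nonneg hb _hc, sq_nonneg (b+c)]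
  exact le_of_pow_le_pow_left₀ two_ne_zero (norm_nonneg _) h2

/-- The polynomial `P_n(λ)` of the non-autocatalytic metabolic cycle. -/
noncomputable def Pfun (n : ℕ) (θ : ℕ → ℝ) (l : ℂ) : ℂ :=
  (((θ 1 : ℂ) - l) * (((θ (n + 2) : ℂ) + (θ (n + 3) : ℂ)) - l) - (θ 1 : ℂ) * (θ (n + 2) : ℂ)) *
    (((θ n : ℂ) + (θ (n + 1) : ℂ)) - l) * ∏ i ∈ Finset.Icc 2 (n - 1), ((θ i : ℂ) - l)

/-- The polynomial `Q₁(λ) = −(θ_{n+3} − λ) ∏_{i=1}^{n} θ_i`. -/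
noncomputable def Qfun (n : ℕ) (θ : ℕ → ℝ) (l : ℂ) : ℂ :=
  -((θ (n + 3) : ℂ) - l) * ∏ i ∈ Finset.Icc 1 n, (θ i : ℂ)

/-- The modulus of `P_n` strictly dominates that of `Q₁` on the whole imaginary axis:
for every real `y`, `|P_n(iy)| > |Q₁(iy)|`. -/
theorem abs_Pn_gt_abs_Q1_on_imaginary_axis (n : ℕ) (hn : 3 ≤ n) (θ : ℕ → ℝ)
    (hθ : ∀ i, 1 ≤ i → i ≤ n + 3 → 0 < θ i) :
    ∀ y : ℝ, ‖Qfun n θ (y * Complex.I)‖ < ‖Pfun n θ (y * Complex.I)‖ := by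
  intro y
  have h1 : 0 < θ 1 := hθ 1 (by omega) (by omega)
  have hnn : 0 < θ n := hθ n (by omega) (by omega)
  have hn1 : 0 < θ (n+1) := hθ (n+1) (by omega) (by omega)
  have hn2 : 0 < θ (n+2) := hθ (n+2) (by omega) (by omega)
  have hn3 : 0 < θ (n+3) := hθ (n+3) (by omega) (by omega)
  have hset : Finset.Icc 1 n = insert 1 (insert n (Finset.Icc 2 (n-1))) := by
    ext i; simp [Finset.mem_Icc]; omega
  have h1n : (1:ℕ) ∉ insert n (Finset.Icc 2 (n-1)) := by simp [Finset.mem_Icc]; omega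
  have hnm : n ∉ Finset.Icc 2 (n-1) := by simp [Finset.mem_Icc]; omega
  have hθpos : ∀ i ∈ Finset.Icc 2 (n-1), 0 < θ i := by
    intro i hi
    rw [Finset.mem_Icc] at hi
    exact hθ i (by omega) (by omega)
  have hQ : ‖Qfun n θ (y * Complex.I)‖ =
      ‖(θ (n+3) : ℂ) - y * Complex.I‖ *
        (θ 1 * (θ n * ∏ i ∈ Finset.Icc 2 (n-1), θ i)) := by
    rw [Qfun, norm_mul, norm_neg, norm_prod]
    congr 1
    rw [hset, Finset.prod_insert h1n, Finset.prod_insert hnm]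
    simp only [Complex.norm_real, Real.norm_eq_abs]
    rw [abs_of_pos h1, abs_of_pos hnn]
    congr 1
    congr 1
    exact Finset.prod_congr rfl fun i hi => abs_of_pos (hθpos i hi)
  have hA := keyA (θ 1) (θ (n+2)) (θ (n+3)) y h1.le hn2.le hn3.le
  have hM : θ n + θ (n+1) ≤ ‖(((θ n : ℂ)) + (θ (n+1) : ℂ)) - y * Complex.I‖ := by
    have := abs_sub_yI_ge (θ n + θ (n+1)) y (by positivity)
    rw [Complex.ofReal_add] at this
    exact this
  have hprod : (∏ i ∈ Finset.Icc 2 (n-1), θ i) ≤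
      ‖∏ i ∈ Finset.Icc 2 (n-1), ((θ i : ℂ) - y * Complex.I)‖ := by
    rw [norm_prod]
    exact Finset.prod_le_prod (fun i hi => (hθpos i hi).le)
      (fun i hi => abs_sub_yI_ge (θ i) y (hθpos i hi).le)
  have hC : 0 < ∏ i ∈ Finset.Icc 2 (n-1), θ i := Finset.prod_pos hθpos
  have hc3 : 0 < ‖(θ (n+3) : ℂ) - y * Complex.I‖ :=
    lt_of_lt_of_le hn3 (abs_sub_yI_ge _ _ hn3.le)
  rw [hQ, Pfun, norm_mul, norm_mul]
  have hAp : 0 < θ 1 * ‖(θ (n+3) : ℂ) - y * Complex.I‖ := by positivity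
  calc ‖(θ (n+3) : ℂ) - y * Complex.I‖ * (θ 1 * (θ n * ∏ i ∈ Finset.Icc 2 (n-1), θ i))
      = (θ 1 * ‖(θ (n+3) : ℂ) - y * Complex.I‖) * θ n *
          (∏ i ∈ Finset.Icc 2 (n-1), θ i) := by ring
    _ < (θ 1 * ‖(θ (n+3) : ℂ) - y * Complex.I‖) * (θ n + θ (n+1)) *
          (∏ i ∈ Finset.Icc 2 (n-1), θ i) := by
        nlinarith [mul_pos (mul_pos hAp hn1) hC]
    _ ≤ _ := by
        apply mul_le_mul (mul_le_mul hA hM (by positivity) (norm_nonneg _)) hprod hC.le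
        positivity
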